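/- Let k be a field of characteristic p > 0, and let W_h = k[h]⟨x, y⟩/(xy - yx - h) be the h-deformed Weyl algebra. Then the elements x^p, y^p, and h are central in W_h, and the subalgebra they generate is a polynomial algebra over k in three variables. -/

import Mathlib

open FreeAlgebra in
/-- The defining relations of the `h`-deformed Weyl algebra
`k[h]⟨x, y⟩ / (xy - yx - h)`: here generator `0` is `x`, `1` is `y`, `2` is `h`;
the relations are `x * y = y * x + h` and `h` is central. -/
inductive WeylHRel (k : Type) [CommRing k] :
    FreeAlgebra k (Fin 3) → FreeAlgebra k (Fin 3) → Prop
  | comm : WeylHRel k (ι k (0 : Fin 3) * ι k (1 : Fin 3))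
      (ι k (1 : Fin 3) * ι k (0 : Fin 3) + ι k (2 : Fin 3))
  | hx : WeylHRel k (ι k (2 : Fin 3) * ι k (0 : Fin 3))
      (ι k (0 : Fin 3) * ι k (2 : Fin 3))
  | hy : WeylHRel k (ι k (2 : Fin 3) * ι k (1 : Fin 3))
      (ι k (1 : Fin 3) * ι k (2 : Fin 3))

/-- The `h`-deformed Weyl algebra `W_h = k[h]⟨x, y⟩ / (xy - yx - h)`. -/
abbrev WeylH (k : Type) [CommRing k] : Type := RingQuot (WeylHRel k)

/-- The generators `x`, `y`, `h` of `W_h`. -/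
noncomputable def WeylH.gen (k : Type) [CommRing k] (i : Fin 3) : WeylH k :=
  RingQuot.mkAlgHom k (WeylHRel k) (FreeAlgebra.ι k i)

open MvPolynomial

variable (k : Type) [CommRing k]

noncomputable abbrev weylAux_g : Fin 3 → Module.End k (MvPolynomial (Fin 3) k) :=
  ![Algebra.lmul k (MvPolynomial (Fin 3) k) (X 0),
    Algebra.lmul k (MvPolynomial (Fin 3) k) (X 1)
      - Algebra.lmul k (MvPolynomial (Fin 3) k) (X 2) *
        ((pderiv 0 : Derivation k (MvPolynomial (Fin 3) k) _) :
          MvPolynomial (Fin 3) k →ₗ[k] MvPolynomial (Fin 3) k),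
    Algebra.lmul k (MvPolynomial (Fin 3) k) (X 2)]

noncomputable def weylAux_rep : WeylH k →ₐ[k] Module.End k (MvPolynomial (Fin 3) k) :=
  RingQuot.liftAlgHom k ⟨FreeAlgebra.lift k (weylAux_g k), by
    rintro a b ⟨⟩ <;>
      simp only [map_mul, map_add, FreeAlgebra.lift_ι_apply, weylAux_g,
        Matrix.cons_val_zero, Matrix.cons_val_one, Matrix.head_cons, Matrix.cons_val_two,
        Matrix.tail_cons] <;>
      refine LinearMap.ext fun f => ?_ <;>
      simp only [Module.End.mul_apply, LinearMap.sub_apply, LinearMap.add_apply,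
        Algebra.coe_lmul_eq_mul, LinearMap.mul_apply', Derivation.coeFn_coe, pderiv_mul,
        pderiv_X_self, pderiv_X_of_ne (show (2:Fin 3) ≠ 0 by decide),
        pderiv_X_of_ne (show (1:Fin 3) ≠ 0 by decide)] <;>
      ring⟩

lemma weylAux_rep_gen (i : Fin 3) : weylAux_rep k (WeylH.gen k i) = weylAux_g k i := by
  rw [WeylH.gen, weylAux_rep, RingQuot.liftAlgHom_mkAlgHom_apply, FreeAlgebra.lift_ι_apply]

lemma weylAux_rel_xy :
    WeylH.gen k 0 * WeylH.gen k 1 = WeylH.gen k 1 * WeylH.gen k 0 + WeylH.gen k 2 := by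
  have := RingQuot.mkAlgHom_rel k (WeylHRel.comm (k := k))
  simpa only [map_mul, map_add, WeylH.gen] using this

lemma weylAux_rel_hx : WeylH.gen k 2 * WeylH.gen k 0 = WeylH.gen k 0 * WeylH.gen k 2 := by
  have := RingQuot.mkAlgHom_rel k (WeylHRel.hx (k := k))
  simpa only [map_mul, WeylH.gen] using this

lemma weylAux_rel_hy : WeylH.gen k 2 * WeylH.gen k 1 = WeylH.gen k 1 * WeylH.gen k 2 := by
  have := RingQuot.mkAlgHom_rel k (WeylHRel.hy (k := k))
  simpa only [map_mul, WeylH.gen] using this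

lemma weylAux_xpow_y (n : ℕ) :
    WeylH.gen k 0 ^ (n + 1) * WeylH.gen k 1
      = WeylH.gen k 1 * WeylH.gen k 0 ^ (n + 1)
        + (n + 1) • (WeylH.gen k 2 * WeylH.gen k 0 ^ n) := by
  induction n with
  | zero => simpa using weylAux_rel_xy k
  | succ n ih =>
    have hXH : WeylH.gen k 0 * WeylH.gen k 2 = WeylH.gen k 2 * WeylH.gen k 0 :=
      (weylAux_rel_hx k).symm
    have e1 : WeylH.gen k 0 * (WeylH.gen k 2 * WeylH.gen k 0 ^ n)
        = WeylH.gen k 2 * WeylH.gen k 0 ^ (n + 1) := by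
      rw [← mul_assoc, hXH, mul_assoc, ← pow_succ']
    calc WeylH.gen k 0 ^ (n + 2) * WeylH.gen k 1
        = WeylH.gen k 0 * (WeylH.gen k 0 ^ (n + 1) * WeylH.gen k 1) := by
          rw [← mul_assoc, ← pow_succ']
      _ = WeylH.gen k 0 * (WeylH.gen k 1 * WeylH.gen k 0 ^ (n + 1))
            + (n + 1) • (WeylH.gen k 2 * WeylH.gen k 0 ^ (n + 1)) := by
          rw [ih, mul_add, mul_smul_comm, e1]
      _ = WeylH.gen k 1 * WeylH.gen k 0 ^ (n + 2) + WeylH.gen k 2 * WeylH.gen k 0 ^ (n + 1)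
            + (n + 1) • (WeylH.gen k 2 * WeylH.gen k 0 ^ (n + 1)) := by
          rw [← mul_assoc, weylAux_rel_xy, add_mul, mul_assoc, ← pow_succ']
      _ = WeylH.gen k 1 * WeylH.gen k 0 ^ (n + 2)
            + (n + 2) • (WeylH.gen k 2 * WeylH.gen k 0 ^ (n + 1)) := by
          rw [add_nsmul, one_nsmul]
          module

lemma weylAux_x_ypow (n : ℕ) :
    WeylH.gen k 0 * WeylH.gen k 1 ^ (n + 1)
      = WeylH.gen k 1 ^ (n + 1) * WeylH.gen k 0
        + (n + 1) • (WeylH.gen k 2 * WeylH.gen k 1 ^ n) := by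
  induction n with
  | zero => simpa using weylAux_rel_xy k
  | succ n ih =>
    have hYH : Commute (WeylH.gen k 1) (WeylH.gen k 2) := (weylAux_rel_hy k).symm
    have e1 : WeylH.gen k 1 ^ (n + 1) * WeylH.gen k 2
        = WeylH.gen k 2 * WeylH.gen k 1 ^ (n + 1) := (hYH.pow_left (n + 1)).eq
    calc WeylH.gen k 0 * WeylH.gen k 1 ^ (n + 2)
        = (WeylH.gen k 0 * WeylH.gen k 1 ^ (n + 1)) * WeylH.gen k 1 := by
          rw [mul_assoc, ← pow_succ]
      _ = WeylH.gen k 1 ^ (n + 1) * (WeylH.gen k 0 * WeylH.gen k 1)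
            + (n + 1) • (WeylH.gen k 2 * WeylH.gen k 1 ^ (n + 1)) := by
          rw [ih, add_mul, smul_mul_assoc, mul_assoc, mul_assoc, ← pow_succ]
      _ = WeylH.gen k 1 ^ (n + 2) * WeylH.gen k 0 + WeylH.gen k 2 * WeylH.gen k 1 ^ (n + 1)
            + (n + 1) • (WeylH.gen k 2 * WeylH.gen k 1 ^ (n + 1)) := by
          rw [weylAux_rel_xy, mul_add, ← mul_assoc, ← pow_succ, e1]
      _ = WeylH.gen k 1 ^ (n + 2) * WeylH.gen k 0
            + (n + 2) • (WeylH.gen k 2 * WeylH.gen k 1 ^ (n + 1)) := by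
          rw [add_nsmul, one_nsmul]
          module

lemma weylAux_mem_center (z : WeylH k)
    (h0 : WeylH.gen k 0 * z = z * WeylH.gen k 0)
    (h1 : WeylH.gen k 1 * z = z * WeylH.gen k 1)
    (h2 : WeylH.gen k 2 * z = z * WeylH.gen k 2) :
    z ∈ Set.center (WeylH k) := by
  rw [Semigroup.mem_center_iff]
  intro g
  obtain ⟨a, rfl⟩ := RingQuot.mkAlgHom_surjective k (WeylHRel k) g
  induction a with
  | grade0 r => rw [AlgHom.commutes]; exact Algebra.commutes r z
  | grade1 i =>
    fin_cases i
    · exact h0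
    · exact h1
    · exact h2
  | mul a b ha hb => rw [map_mul, mul_assoc, hb, ← mul_assoc, ha, mul_assoc]
  | add a b ha hb => rw [map_add, add_mul, mul_add, ha, hb]

noncomputable def weylAux_t (e : Fin 3 → ℕ) (s : Fin 3 →₀ ℕ) : Fin 3 →₀ ℕ :=
  Finsupp.equivFunOnFinite.symm fun i => e i * s i

lemma weylAux_t_apply (e : Fin 3 → ℕ) (s : Fin 3 →₀ ℕ) (i : Fin 3) :
    weylAux_t e s i = e i * s i := rfl

lemma weylAux_t_injective (e : Fin 3 → ℕ) (he : ∀ i, e i ≠ 0) :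
    Function.Injective (weylAux_t e) := by
  intro s s' h
  ext i
  have := congrArg (fun u : Fin 3 →₀ ℕ => u i) h
  simp only [weylAux_t_apply] at this
  exact Nat.eq_of_mul_eq_mul_left (Nat.pos_of_ne_zero (he i)) this

lemma weylAux_aeval_monomial (e : Fin 3 → ℕ) (s : Fin 3 →₀ ℕ) (a : k) :
    MvPolynomial.aeval (fun i => (X i : MvPolynomial (Fin 3) k) ^ e i) (monomial s a)
      = monomial (weylAux_t e s) a := by
  rw [aeval_monomial, monomial_eq]
  congr 1
  rw [Finsupp.prod_fintype _ _ (fun i => by simp),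
    Finsupp.prod_fintype _ _ (fun i => by simp)]
  refine Finset.prod_congr rfl fun i _ => ?_
  rw [← pow_mul, weylAux_t_apply]

lemma weylAux_beta_injective (e : Fin 3 → ℕ) (he : ∀ i, e i ≠ 0) :
    Function.Injective
      (MvPolynomial.aeval (R := k) (fun i => (X i : MvPolynomial (Fin 3) k) ^ e i)) := by
  have key : ∀ (f : MvPolynomial (Fin 3) k) (s : Fin 3 →₀ ℕ),
      coeff (weylAux_t e s) (MvPolynomial.aeval (fun i => (X i : MvPolynomial (Fin 3) k) ^ e i) f)
        = coeff s f := by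
    intro f s
    classical
    have hβ : MvPolynomial.aeval (fun i => (X i : MvPolynomial (Fin 3) k) ^ e i) f
        = ∑ u ∈ f.support, monomial (weylAux_t e u) (coeff u f) := by
      conv_lhs => rw [f.as_sum]
      rw [map_sum]
      exact Finset.sum_congr rfl fun u _ => weylAux_aeval_monomial k e u _
    rw [hβ, MvPolynomial.coeff_sum]
    by_cases hs : s ∈ f.support
    · rw [Finset.sum_eq_single_of_mem s hs (fun u _ hu => ?_)]
      · simp [coeff_monomial]
      · rw [coeff_monomial, if_neg fun hc => hu (weylAux_t_injective e he hc)]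
    · rw [Finset.sum_eq_zero fun u hu => ?_, (notMem_support_iff.1 hs)]
      rw [coeff_monomial, if_neg fun hc => (by
        exact hs ((weylAux_t_injective e he hc) ▸ hu) : False)]
  intro f g hfg
  ext s
  rw [← key f s, ← key g s, hfg]


lemma weylAux_pderiv_pow_monomial (k : Type) [CommRing k] (i : Fin 3) (n : ℕ)
    (s : Fin 3 →₀ ℕ) (a : k) :
    (((pderiv i : Derivation k (MvPolynomial (Fin 3) k) _) :
        MvPolynomial (Fin 3) k →ₗ[k] MvPolynomial (Fin 3) k) ^ n) (monomial s a)
      = monomial (s - Finsupp.single i n) (a * (s i).descFactorial n) := by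
  induction n generalizing s a with
  | zero => simp
  | succ n ih =>
    rw [pow_succ, Module.End.mul_apply, Derivation.coeFn_coe, pderiv_monomial, ih]
    have h1 : s - Finsupp.single i 1 - Finsupp.single i n = s - Finsupp.single i (n + 1) := by
      rw [tsub_tsub, ← Finsupp.single_add, add_comm]
    have h2 : ((s - Finsupp.single i 1 : Fin 3 →₀ ℕ)) i = s i - 1 := by
      simp [Finsupp.tsub_apply]
    have h3 : (s i) * ((s i - 1).descFactorial n) = (s i).descFactorial (n + 1) := by
      cases hm : s i with
      | zero => simp
      | succ m =>
        simp only [Nat.add_sub_cancel]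
        rw [Nat.succ_descFactorial_succ]
    rw [h1, h2]
    congr 1
    push_cast [← h3]
    ring

lemma weylAux_pderiv_pow_p (k : Type) [Field k] (p : ℕ) [Fact p.Prime] [CharP k p] (i : Fin 3) :
    (((pderiv i : Derivation k (MvPolynomial (Fin 3) k) _) :
        MvPolynomial (Fin 3) k →ₗ[k] MvPolynomial (Fin 3) k) ^ p) = 0 := by
  apply LinearMap.ext
  intro f
  induction f using MvPolynomial.induction_on' with
  | monomial s a =>
    rw [weylAux_pderiv_pow_monomial]
    have hd : ((s i).descFactorial p : k) = 0 := by
      rw [CharP.cast_eq_zero_iff k p]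
      rw [Nat.descFactorial_eq_factorial_mul_choose]
      exact dvd_mul_of_dvd_left (Nat.dvd_factorial (Fact.out : p.Prime).pos le_rfl) _
    simp [hd]
  | add f g hf hg => simp only [map_add, hf, hg, LinearMap.zero_apply, add_zero]

theorem weylH_frobenius_center
    (k : Type) [Field k] (p : ℕ) [Fact p.Prime] [CharP k p] :
    ((WeylH.gen k 0) ^ p ∈ Set.center (WeylH k) ∧
      (WeylH.gen k 1) ^ p ∈ Set.center (WeylH k) ∧
      WeylH.gen k 2 ∈ Set.center (WeylH k)) ∧
    Nonempty (MvPolynomial (Fin 3) k ≃ₐ[k]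
      (Algebra.adjoin k {(WeylH.gen k 0) ^ p, (WeylH.gen k 1) ^ p, WeylH.gen k 2} :
        Subalgebra k (WeylH k))) := by
  have hp : p.Prime := Fact.out
  have hp1 : p - 1 + 1 = p := Nat.succ_pred_eq_of_pos hp.pos
  have hsmul : ∀ w : WeylH k, p • w = 0 := fun w => by
    rw [← Nat.cast_smul_eq_nsmul k, CharP.cast_eq_zero k p, zero_smul]
  have hcx : Commute (WeylH.gen k 2) (WeylH.gen k 0) := weylAux_rel_hx k
  have hcy : Commute (WeylH.gen k 2) (WeylH.gen k 1) := weylAux_rel_hy k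
  have hc0 : (WeylH.gen k 0) ^ p ∈ Set.center (WeylH k) := by
    refine weylAux_mem_center k _ ((Commute.refl _).pow_right p).eq ?_ (hcx.pow_right p).eq
    have := weylAux_xpow_y k (p - 1)
    rw [hp1] at this
    rw [this, hsmul, add_zero]
  have hc1 : (WeylH.gen k 1) ^ p ∈ Set.center (WeylH k) := by
    refine weylAux_mem_center k _ ?_ ((Commute.refl _).pow_right p).eq (hcy.pow_right p).eq
    have := weylAux_x_ypow k (p - 1)
    rw [hp1] at this
    rw [this, hsmul, add_zero]
  have hc2 : WeylH.gen k 2 ∈ Set.center (WeylH k) :=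
    weylAux_mem_center k _ (weylAux_rel_hx k).symm (weylAux_rel_hy k).symm rfl
  refine ⟨⟨hc0, hc1, hc2⟩, ?_⟩
  -- the polynomial algebra part
  have hmem : ∀ i : Fin 3, (![(WeylH.gen k 0) ^ p, (WeylH.gen k 1) ^ p, WeylH.gen k 2] i)
      ∈ Subalgebra.center k (WeylH k) := by
    intro i
    fin_cases i
    · exact hc0
    · exact hc1
    · exact hc2
  set α' : MvPolynomial (Fin 3) k →ₐ[k] Subalgebra.center k (WeylH k) :=
    MvPolynomial.aeval (R := k) (fun i => (⟨_, hmem i⟩ : Subalgebra.center k (WeylH k)))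
    with hα'
  set α : MvPolynomial (Fin 3) k →ₐ[k] WeylH k :=
    (Subalgebra.center k (WeylH k)).val.comp α' with hα
  have hαX : ∀ i : Fin 3,
      α (X i) = ![(WeylH.gen k 0) ^ p, (WeylH.gen k 1) ^ p, WeylH.gen k 2] i := by
    intro i
    simp [hα, hα']
  set e : Fin 3 → ℕ := ![p, p, 1] with he_def
  have he : ∀ i, e i ≠ 0 := by
    intro i
    fin_cases i <;> simp [he_def, hp.ne_zero]
  set β : MvPolynomial (Fin 3) k →ₐ[k] (MvPolynomial (Fin 3) k) :=
    MvPolynomial.aeval (fun i => (X i : (MvPolynomial (Fin 3) k)) ^ e i) with hβ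
  haveI : CharP (Module.End k (MvPolynomial (Fin 3) k)) p := by
    refine charP_of_injective_algebraMap (R := k) (A := Module.End k (MvPolynomial (Fin 3) k))
      (fun a b hab => ?_) p
    have h1 := congrArg (fun f : Module.End k (MvPolynomial (Fin 3) k) => f 1) hab
    simp only [Module.algebraMap_end_apply] at h1
    rw [← Algebra.algebraMap_eq_smul_one, ← Algebra.algebraMap_eq_smul_one] at h1
    exact (algebraMap k (MvPolynomial (Fin 3) k)).injective h1
  have hcomp : (weylAux_rep k).comp α = (Algebra.lmul k (MvPolynomial (Fin 3) k)).comp β := by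
    apply MvPolynomial.algHom_ext
    intro i
    simp only [AlgHom.comp_apply, hαX, hβ, MvPolynomial.aeval_X]
    fin_cases i
    · show (weylAux_rep k) (WeylH.gen k 0 ^ p) = Algebra.lmul k (MvPolynomial (Fin 3) k) ((X 0 : (MvPolynomial (Fin 3) k)) ^ p)
      rw [map_pow, weylAux_rep_gen, map_pow]
      rfl
    · -- the y^p case
      have hD := weylAux_pderiv_pow_p k p (0 : Fin 3)
      have hcommAB : Commute (Algebra.lmul k (MvPolynomial (Fin 3) k) (X 1))
          (Algebra.lmul k (MvPolynomial (Fin 3) k) (X 2) * ((pderiv 0 : Derivation k (MvPolynomial (Fin 3) k) (MvPolynomial (Fin 3) k)) : (MvPolynomial (Fin 3) k) →ₗ[k] (MvPolynomial (Fin 3) k))) := by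
        refine LinearMap.ext fun f => ?_
        simp only [Module.End.mul_apply, Algebra.coe_lmul_eq_mul,
          LinearMap.mul_apply', Derivation.coeFn_coe, pderiv_mul,
          pderiv_X_of_ne (show (1:Fin 3) ≠ 0 by decide)]
        ring
      have hcommHD : Commute (Algebra.lmul k (MvPolynomial (Fin 3) k) (X 2))
          (((pderiv 0 : Derivation k (MvPolynomial (Fin 3) k) (MvPolynomial (Fin 3) k)) : (MvPolynomial (Fin 3) k) →ₗ[k] (MvPolynomial (Fin 3) k))) := by
        refine LinearMap.ext fun f => ?_
        simp only [Module.End.mul_apply, Algebra.coe_lmul_eq_mul,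
          LinearMap.mul_apply', Derivation.coeFn_coe, pderiv_mul,
          pderiv_X_of_ne (show (2:Fin 3) ≠ 0 by decide)]
        ring
      have key : (weylAux_g k 1) ^ p = Algebra.lmul k (MvPolynomial (Fin 3) k) ((X 1 : (MvPolynomial (Fin 3) k)) ^ p) := by
        show (Algebra.lmul k (MvPolynomial (Fin 3) k) (X 1)
          - Algebra.lmul k (MvPolynomial (Fin 3) k) (X 2) * ((pderiv 0 : Derivation k (MvPolynomial (Fin 3) k) (MvPolynomial (Fin 3) k)) : (MvPolynomial (Fin 3) k) →ₗ[k] (MvPolynomial (Fin 3) k))) ^ p = _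
        rw [sub_pow_char_of_commute _ hcommAB, hcommHD.mul_pow, hD, mul_zero, sub_zero,
          map_pow]
      show (weylAux_rep k) (WeylH.gen k 1 ^ p) = Algebra.lmul k (MvPolynomial (Fin 3) k) ((X 1 : (MvPolynomial (Fin 3) k)) ^ p)
      rw [map_pow, weylAux_rep_gen, key]
    · show (weylAux_rep k) (WeylH.gen k 2) = Algebra.lmul k (MvPolynomial (Fin 3) k) ((X 2 : (MvPolynomial (Fin 3) k)) ^ 1)
      rw [weylAux_rep_gen, pow_one]
      rfl
  have hαinj : Function.Injective α := by
    have h1 : Function.Injective (⇑(weylAux_rep k) ∘ ⇑α) := by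
      rw [← AlgHom.coe_comp, hcomp, AlgHom.coe_comp]
      exact (Algebra.lmul_injective).comp (weylAux_beta_injective k e he)
    exact Function.Injective.of_comp h1
  have hrange : α.range
      = Algebra.adjoin k
          ({(WeylH.gen k 0) ^ p, (WeylH.gen k 1) ^ p, WeylH.gen k 2} : Set (WeylH k)) := by
    have h1 : α.range = (Algebra.adjoin k
        (Set.range (X : Fin 3 → MvPolynomial (Fin 3) k))).map α := by
      rw [MvPolynomial.adjoin_range_X, Algebra.map_top]
    rw [h1, AlgHom.map_adjoin, ← Set.range_comp]
    have hfun : (⇑α ∘ X : Fin 3 → WeylH k)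
        = ![(WeylH.gen k 0) ^ p, (WeylH.gen k 1) ^ p, WeylH.gen k 2] := funext hαX
    rw [hfun]
    congr 1
    ext w
    simp only [Matrix.range_cons, Matrix.range_cons_empty, Set.singleton_union,
      Set.mem_insert_iff, Set.mem_singleton_iff, Set.mem_union, Matrix.range_empty,
      Set.mem_empty_iff_false, Set.union_empty]
  exact ⟨(AlgEquiv.ofInjective α hαinj).trans (Subalgebra.equivOfEq _ _ hrange)⟩
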